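/- For every $\sigma \in (1,2)$, one has $\int_0^1 y^{-\sigma}\big[(1-y)^{\sigma-2} - 1\big]\,dy = \frac{1}{\sigma-1}$. -/

import Mathlib

open MeasureTheory Set Filter Real

/-- For every `σ ∈ (1,2)`,
`∫_0^1 y^{-σ} [(1-y)^{σ-2} - 1] dy = 1/(σ-1)`. -/
theorem stmt1 (σ : ℝ) (hσ : σ ∈ Ioo (1:ℝ) 2) :
    IntegrableOn (fun y : ℝ => y ^ (-σ) * ((1 - y) ^ (σ - 2) - 1)) (Ioo (0:ℝ) 1) volume ∧
    ∫ y in Ioo (0:ℝ) 1, y ^ (-σ) * ((1 - y) ^ (σ - 2) - 1) = 1 / (σ - 1) := by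
  obtain ⟨h1, h2⟩ := hσ
  have hσ1 : (0:ℝ) < σ - 1 := by linarith
  have hσ1' : σ - 1 ≠ 0 := ne_of_gt hσ1
  set f : ℝ → ℝ := fun y => y ^ (-σ) * ((1 - y) ^ (σ - 2) - 1) with hfdef
  set F : ℝ → ℝ := fun y => y ^ (1 - σ) * (1 - (1 - y) ^ (σ - 1)) / (σ - 1) with hFdef
  -- derivative of F is f on (0,1)
  have hderiv : ∀ y ∈ Ioo (0:ℝ) 1, HasDerivAt F (f y) y := by
    intro y hy
    have hy0 : 0 < y := hy.1
    have hy1 : 0 < 1 - y := by linarith [hy.2]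
    have d1 : HasDerivAt (fun x : ℝ => x ^ (1 - σ)) ((1 - σ) * y ^ (-σ)) y := by
      have h := Real.hasDerivAt_rpow_const (x := y) (p := 1 - σ) (Or.inl hy0.ne')
      have he : (1 - σ) * y ^ (1 - σ - 1) = (1 - σ) * y ^ (-σ) := by
        rw [show (1 - σ - 1) = -σ by ring]
      rwa [he] at h
    have hinner : HasDerivAt (fun x : ℝ => 1 - x) (-1) y := (hasDerivAt_id y).const_sub 1
    have h2' : HasDerivAt (fun x : ℝ => x ^ (σ - 1)) ((σ - 1) * (1 - y) ^ (σ - 2)) (1 - y) := by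
      have h := Real.hasDerivAt_rpow_const (x := 1 - y) (p := σ - 1) (Or.inl hy1.ne')
      have he : (σ - 1) * (1 - y) ^ (σ - 1 - 1) = (σ - 1) * (1 - y) ^ (σ - 2) := by
        rw [show (σ - 1 - 1) = σ - 2 by ring]
      rwa [he] at h
    have d2 : HasDerivAt (fun x : ℝ => 1 - (1 - x) ^ (σ - 1))
        ((σ - 1) * (1 - y) ^ (σ - 2)) y := by
      have := (h2'.comp y hinner).const_sub 1
      refine this.congr_deriv ?_
      ring
    have hd := ((d1.mul d2).div_const (σ - 1))
    refine hd.congr_deriv ?_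
    have e1 : y ^ (1 - σ) = y ^ (-σ) * y := by
      rw [show (1 - σ) = -σ + 1 by ring, Real.rpow_add hy0, Real.rpow_one]
    have e2 : (1 - y) ^ (σ - 1) = (1 - y) ^ (σ - 2) * (1 - y) := by
      rw [show (σ - 1) = (σ - 2) + 1 by ring, Real.rpow_add hy1, Real.rpow_one]
    simp only [hfdef]
    rw [e1, e2]
    field_simp
    ring
  -- f is nonnegative on (0,1)
  have hfnonneg : ∀ y ∈ Ioo (0:ℝ) 1, 0 ≤ f y := by
    intro y hy
    have hy0 : 0 < y := hy.1
    have hy1 : 0 < 1 - y := by linarith [hy.2]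
    have hA : 0 < y ^ (-σ) := Real.rpow_pos_of_pos hy0 _
    have hB : 1 ≤ (1 - y) ^ (σ - 2) :=
      Real.one_le_rpow_of_pos_of_le_one_of_nonpos hy1 (by linarith [hy.1]) (by linarith)
    have : 0 ≤ (1 - y) ^ (σ - 2) - 1 := by linarith
    exact mul_nonneg hA.le this
  -- continuity of f on (0,1)
  have hcont : ContinuousOn f (Ioo (0:ℝ) 1) := by
    intro y hy
    have hy0 : 0 < y := hy.1
    have hy1 : 0 < 1 - y := by linarith [hy.2]
    apply ContinuousAt.continuousWithinAt
    have c1 : ContinuousAt (fun x : ℝ => x ^ (-σ)) y :=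
      Real.continuousAt_rpow_const _ _ (Or.inl hy0.ne')
    have c2 : ContinuousAt (fun x : ℝ => (1 - x) ^ (σ - 2)) y := by
      have h := Real.continuousAt_rpow_const (1 - y) (σ - 2) (Or.inl hy1.ne')
      exact h.comp (continuousAt_const.sub continuousAt_id)
    exact c1.mul (c2.sub continuousAt_const)
  -- F is nonneg on (0,1)
  have hFnonneg : ∀ y ∈ Ioo (0:ℝ) 1, 0 ≤ F y := by
    intro y hy
    have hy0 : 0 < y := hy.1
    have hy1 : 0 < 1 - y := by linarith [hy.2]
    have hA : 0 < y ^ (1 - σ) := Real.rpow_pos_of_pos hy0 _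
    have hB : (1 - y) ^ (σ - 1) ≤ 1 :=
      Real.rpow_le_one hy1.le (by linarith [hy.1]) (by linarith)
    apply div_nonneg _ hσ1.le
    exact mul_nonneg hA.le (by linarith)
  -- F bounded above by y^(2-σ) (1-y)^(σ-2)
  have hFbound : ∀ y ∈ Ioo (0:ℝ) 1, F y ≤ y ^ (2 - σ) * (1 - y) ^ (σ - 2) := by
    intro y hy
    have hy0 : 0 < y := hy.1
    have hy1 : 0 < 1 - y := by linarith [hy.2]
    have hp0 : 0 < σ - 1 := hσ1
    -- AM-GM: (1-y)^(1-(σ-1)) ≤ (1-(σ-1))*(1-y) + (σ-1)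
    have amgm : (1 - y) ^ (1 - (σ - 1)) ≤ (1 - (σ - 1)) * (1 - y) + (σ - 1) := by
      have := Real.geom_mean_le_arith_mean2_weighted (w₁ := 1 - (σ - 1)) (w₂ := σ - 1)
        (p₁ := 1 - y) (p₂ := 1) (by linarith) hp0.le hy1.le zero_le_one (by ring)
      simpa using this
    -- hence 1 - (1-y)^(σ-1) ≤ (σ-1) * (1-y)^(σ-2) * y
    have hkey : 1 - (1 - y) ^ (σ - 1) ≤ (σ - 1) * (1 - y) ^ (σ - 2) * y := by
      have hzp1 : (0:ℝ) < (1 - y) ^ (σ - 2) := Real.rpow_pos_of_pos hy1 _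
      have e1 : (1 - y) ^ (1 - (σ - 1)) * (1 - y) ^ (σ - 2) = 1 := by
        rw [← Real.rpow_add hy1, show 1 - (σ - 1) + (σ - 2) = 0 by ring, Real.rpow_zero]
      have e2 : (1 - y) * (1 - y) ^ (σ - 2) = (1 - y) ^ (σ - 1) := by
        rw [show (1 - y) * (1 - y) ^ (σ - 2) = (1 - y) ^ (σ - 2) * (1 - y) by ring,
          ← Real.rpow_add_one hy1.ne']
        ring_nf
      have hm := mul_le_mul_of_nonneg_right amgm hzp1.le
      rw [e1] at hm
      nlinarith [hm]
    have hA : 0 < y ^ (1 - σ) := Real.rpow_pos_of_pos hy0 _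
    have e3 : y ^ (1 - σ) * y = y ^ (2 - σ) := by
      rw [← Real.rpow_add_one hy0.ne']
      ring_nf
    calc F y = y ^ (1 - σ) * (1 - (1 - y) ^ (σ - 1)) / (σ - 1) := rfl
      _ ≤ y ^ (1 - σ) * ((σ - 1) * (1 - y) ^ (σ - 2) * y) / (σ - 1) := by
          gcongr
      _ = (y ^ (1 - σ) * y) * (1 - y) ^ (σ - 2) := by
          field_simp
      _ = y ^ (2 - σ) * (1 - y) ^ (σ - 2) := by rw [e3]
  -- limit of F at 0⁺ is 0
  have hFa : Tendsto F (nhdsWithin 0 (Ioi (0:ℝ))) (nhds 0) := by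
    have hg : Tendsto (fun y : ℝ => y ^ (2 - σ) * (1 - y) ^ (σ - 2))
        (nhdsWithin 0 (Ioi (0:ℝ))) (nhds 0) := by
      have c1 : Tendsto (fun y : ℝ => y ^ (2 - σ)) (nhdsWithin 0 (Ioi (0:ℝ))) (nhds 0) := by
        have := (Real.continuousAt_rpow_const 0 (2 - σ) (Or.inr (by linarith))).continuousWithinAt
          (s := Ioi (0:ℝ))
        simpa [Real.zero_rpow (show (2:ℝ) - σ ≠ 0 by linarith)] using this.tendsto
      have c2 : Tendsto (fun y : ℝ => (1 - y) ^ (σ - 2)) (nhdsWithin 0 (Ioi (0:ℝ))) (nhds 1) := by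
        have hb : ContinuousAt (fun y : ℝ => (1 - y) ^ (σ - 2)) 0 := by
          have h := Real.continuousAt_rpow_const 1 (σ - 2) (Or.inl one_ne_zero)
          exact h.comp_of_eq (continuousAt_const.sub continuousAt_id) (by norm_num)
        have := hb.continuousWithinAt (s := Ioi (0:ℝ))
        simpa [Real.one_rpow] using this.tendsto
      simpa using c1.mul c2
    refine squeeze_zero' ?_ ?_ hg
    · filter_upwards [self_mem_nhdsWithin, Ioo_mem_nhdsGT_of_mem (by norm_num : (0:ℝ) ∈ Ico (0:ℝ) 1)] with y hy hy'
      exact hFnonneg y hy'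
    · filter_upwards [Ioo_mem_nhdsGT_of_mem (by norm_num : (0:ℝ) ∈ Ico (0:ℝ) 1)] with y hy
      exact hFbound y hy
  -- limit of F at 1⁻ is 1/(σ-1)
  have hFb : Tendsto F (nhdsWithin 1 (Iio (1:ℝ))) (nhds (1 / (σ - 1))) := by
    have c1 : Tendsto (fun y : ℝ => y ^ (1 - σ)) (nhdsWithin 1 (Iio (1:ℝ))) (nhds 1) := by
      have := (Real.continuousAt_rpow_const 1 (1 - σ) (Or.inl one_ne_zero)).continuousWithinAt
        (s := Iio (1:ℝ))
      simpa [Real.one_rpow] using this.tendsto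
    have c2 : Tendsto (fun y : ℝ => (1 - y) ^ (σ - 1)) (nhdsWithin 1 (Iio (1:ℝ))) (nhds 0) := by
      have hb : ContinuousAt (fun y : ℝ => (1 - y) ^ (σ - 1)) 1 := by
        have h := Real.continuousAt_rpow_const 0 (σ - 1) (Or.inr hσ1.le)
        exact h.comp_of_eq (continuousAt_const.sub continuousAt_id) (by norm_num)
      have := hb.continuousWithinAt (s := Iio (1:ℝ))
      simpa [Real.zero_rpow hσ1'] using this.tendsto
    have : Tendsto (fun y : ℝ => y ^ (1 - σ) * (1 - (1 - y) ^ (σ - 1)) / (σ - 1))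
        (nhdsWithin 1 (Iio (1:ℝ))) (nhds (1 * (1 - 0) / (σ - 1))) :=
      (c1.mul (tendsto_const_nhds.sub c2)).div_const _
    simpa using this
  -- interval integral over compact subintervals via FTC
  have hFTC : ∀ a b : ℝ, a ∈ Ioo (0:ℝ) 1 → b ∈ Ioo (0:ℝ) 1 → a ≤ b →
      ∫ x in a..b, f x = F b - F a := by
    intro a b ha hb hab
    have hsub : uIcc a b ⊆ Ioo (0:ℝ) 1 := by
      rw [uIcc_of_le hab]
      exact fun x hx => ⟨lt_of_lt_of_le ha.1 hx.1, lt_of_le_of_lt hx.2 hb.2⟩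
    apply intervalIntegral.integral_eq_sub_of_hasDerivAt
    · exact fun x hx => hderiv x (hsub hx)
    · exact (hcont.mono hsub).intervalIntegrable
  -- sequences approaching 0 and 1
  set a : ℕ → ℝ := fun n => (1/2 : ℝ) ^ (n + 1) with hadef
  set b : ℕ → ℝ := fun n => 1 - (1/2 : ℝ) ^ (n + 1) with hbdef
  have hamem : ∀ n, a n ∈ Ioo (0:ℝ) 1 := by
    intro n
    constructor
    · positivity
    · calc (1/2 : ℝ) ^ (n + 1) ≤ (1/2 : ℝ) ^ 1 :=
          pow_le_pow_of_le_one (by norm_num) (by norm_num) (by omega)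
        _ < 1 := by norm_num
  have hbmem : ∀ n, b n ∈ Ioo (0:ℝ) 1 := by
    intro n
    have := hamem n
    constructor <;> [skip; skip] <;> simp only [hbdef] <;> [linarith [this.2]; linarith [this.1]]
  have hab : ∀ n, a n ≤ b n := by
    intro n
    have : (1/2 : ℝ) ^ (n + 1) ≤ (1/2 : ℝ) ^ 1 :=
      pow_le_pow_of_le_one (by norm_num) (by norm_num) (by omega)
    simp only [hadef, hbdef]
    simp only [pow_one] at this
    linarith
  have hpowlim : Tendsto (fun n : ℕ => (1/2 : ℝ) ^ (n + 1)) atTop (nhds 0) := by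
    have := tendsto_pow_atTop_nhds_zero_of_lt_one (by norm_num : (0:ℝ) ≤ 1/2)
      (by norm_num : (1/2 : ℝ) < 1)
    exact this.comp (tendsto_add_atTop_nat 1)
  have hta : Tendsto a atTop (nhds 0) := hpowlim
  have htb : Tendsto b atTop (nhds 1) := by
    have h := tendsto_const_nhds (α := ℕ) (x := (1:ℝ)) |>.sub hpowlim
    rw [sub_zero] at h
    exact h
  -- integrability on each Ioc (a n) (b n)
  have hfi : ∀ n, IntegrableOn f (Ioc (a n) (b n)) volume := by
    intro n
    have hsub : Icc (a n) (b n) ⊆ Ioo (0:ℝ) 1 := fun x hx =>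
      ⟨lt_of_lt_of_le (hamem n).1 hx.1, lt_of_le_of_lt hx.2 (hbmem n).2⟩
    exact ((hcont.mono hsub).integrableOn_Icc).mono_set Ioc_subset_Icc_self
  -- interval integrals of ‖f‖ tend to 1/(σ-1)
  have hnormint : ∀ n, (∫ x in Ioc (a n) (b n), ‖f x‖) = F (b n) - F (a n) := by
    intro n
    have hsub : Ioc (a n) (b n) ⊆ Ioo (0:ℝ) 1 := fun x hx =>
      ⟨lt_trans (hamem n).1 hx.1, lt_of_le_of_lt hx.2 (hbmem n).2⟩
    have : (∫ x in Ioc (a n) (b n), ‖f x‖) = ∫ x in Ioc (a n) (b n), f x := by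
      apply setIntegral_congr_fun measurableSet_Ioc
      intro x hx
      exact Real.norm_of_nonneg (hfnonneg x (hsub hx))
    rw [this, ← intervalIntegral.integral_of_le (hab n)]
    exact hFTC _ _ (hamem n) (hbmem n) (hab n)
  have htend : Tendsto (fun n => ∫ x in Ioc (a n) (b n), ‖f x‖) atTop
      (nhds (1 / (σ - 1) - 0)) := by
    have h1 : Tendsto (fun n => F (b n)) atTop (nhds (1 / (σ - 1))) := by
      apply hFb.comp
      rw [tendsto_nhdsWithin_iff]
      exact ⟨htb, Eventually.of_forall fun n => (hbmem n).2⟩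
    have h2 : Tendsto (fun n => F (a n)) atTop (nhds 0) := by
      apply hFa.comp
      rw [tendsto_nhdsWithin_iff]
      exact ⟨hta, Eventually.of_forall fun n => (hamem n).1⟩
    have := h1.sub h2
    refine this.congr fun n => (hnormint n).symm
  -- integrability on Ioc 0 1, hence Ioo 0 1
  obtain ⟨I, hI⟩ := htend.isBoundedUnder_le
  have hintIoc : IntegrableOn f (Ioc (0:ℝ) 1) volume := by
    refine integrableOn_Ioc_of_intervalIntegral_norm_bounded (I := I) hfi hta htb ?_
    simp only [eventually_map] at hI
    filter_upwards [hI] with n hn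
    exact hn
  have hintIoo : IntegrableOn f (Ioo (0:ℝ) 1) volume := hintIoc.mono_set Ioo_subset_Ioc_self
  refine ⟨hintIoo, ?_⟩
  -- compute the integral
  have heq : ∫ y in Ioo (0:ℝ) 1, f y = ∫ y in (0:ℝ)..1, f y := by
    rw [intervalIntegral.integral_of_le zero_le_one, integral_Ioc_eq_integral_Ioo]
  rw [heq]
  have := intervalIntegral.integral_eq_sub_of_hasDerivAt_of_tendsto zero_lt_one hderiv
    ((intervalIntegrable_iff_integrableOn_Ioc_of_le zero_le_one).mpr hintIoc) hFa hFb
  rw [this]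
  ring
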